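/- Let Q be a finite quiver without sources and (p, q) an associated pair in Q. In the right B = L_k(Q^op)-module P•, one has (Σ_{i ∈ Q₀} e_i ζ_{(e_i, e_i)}) · (p^op)* q^op = e_{t(p)} ζ_{(p, q)}, and for each arrow β ∈ Q₁, β ζ_{(e_{s(β)}, e_{s(β)})} · (p^op)* q^op = δ_{s(β), t(p)} β ζ_{(p, q)}. -/

import Mathlib

noncomputable section

/-- A finite quiver: finite sets of vertices and arrows, with source and target maps. -/
structure FQ where
  V : Type
  E : Type
  [fV : Fintype V]
  [fE : Fintype E]
  [dV : DecidableEq V]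
  [dE : DecidableEq E]
  s : E → V
  t : E → V

attribute [instance] FQ.fV FQ.fE FQ.dV FQ.dE

/-- `Q` has no sources: every vertex admits an arrow terminating at it. -/
def FQ.NoSources (Q : FQ) : Prop := ∀ i : Q.V, ∃ e : Q.E, Q.t e = i

/-- The opposite quiver. -/
def FQ.op (Q : FQ) : FQ := { V := Q.V, E := Q.E, s := Q.t, t := Q.s }

/-- Paths in the quiver `Q` from a vertex to a vertex; `cons p e he` is the path
`e ∘ p` obtained by composing an arrow `e` after the path `p` (paths are written
from right to left). -/
inductive QP (Q : FQ) : Q.V → Q.V → Type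
  | nil (i : Q.V) : QP Q i i
  | cons {i j : Q.V} (p : QP Q i j) (e : Q.E) (he : Q.s e = j) : QP Q i (Q.t e)

namespace QP

variable {Q : FQ}

/-- The length of a path. -/
def length : ∀ {i j : Q.V}, QP Q i j → ℕ
  | _, _, .nil _ => 0
  | _, _, .cons p _ _ => length p + 1

/-- The first (rightmost) arrow of a path, if any. -/
def firstArrow : ∀ {i j : Q.V}, QP Q i j → Option Q.E
  | _, _, .nil _ => none
  | _, _, .cons p e _ => some ((firstArrow p).getD e)

/-- The last (leftmost) arrow of a path, if any. -/
def lastArrow : ∀ {i j : Q.V}, QP Q i j → Option Q.E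
  | _, _, .nil _ => none
  | _, _, .cons _ e _ => some e

/-- Transport of a path along an equality of its starting vertices. -/
def castSrc {i i' j : Q.V} (h : i = i') (p : QP Q i j) : QP Q i' j := h ▸ p

/-- Extend a path at its starting vertex by an arrow (`p ↦ p ∘ e`). -/
def preCons (e : Q.E) : ∀ {j : Q.V}, QP Q (Q.t e) j → QP Q (Q.s e) j
  | _, .nil _ => .cons (.nil (Q.s e)) e rfl
  | _, .cons p f hf => .cons (preCons e p) f hf

lemma length_castSrc {i i' j : Q.V} (h : i = i') (p : QP Q i j) :
    (castSrc h p).length = p.length := by subst h; rfl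

lemma length_preCons (e : Q.E) : ∀ {j : Q.V} (p : QP Q (Q.t e) j),
    (preCons e p).length = p.length + 1
  | _, .nil _ => by simp [preCons, length]
  | _, .cons p f hf => by
      show (QP.cons (preCons e p) f hf).length = _
      simp [length, length_preCons e p]

end QP

/-- With respect to a choice `asc` of an *associated* arrow terminating at each
non-source vertex, `IsAssoc Q asc a` says that the arrow `a` is the associated arrow
terminating at its target. -/
def IsAssoc (Q : FQ) (asc : ∀ i : Q.V, (∃ e, Q.t e = i) → Q.E) (a : Q.E) : Prop :=
  asc (Q.t a) ⟨a, rfl⟩ = a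

/-- `(p, q)` is an *associated pair*: the paths `p` and `q` start at the same vertex,
and either one of them is trivial, or their first arrows differ, or their common first
arrow is not associated. -/
def AssocPair (Q : FQ) (asc : ∀ i : Q.V, (∃ e, Q.t e = i) → Q.E)
    {i j j' : Q.V} (p : QP Q i j) (q : QP Q i j') : Prop :=
  ∀ a : Q.E, p.firstArrow = some a → q.firstArrow = some a → ¬ IsAssoc Q asc a

lemma assocPair_nil_left {Q : FQ} {asc : ∀ i : Q.V, (∃ e, Q.t e = i) → Q.E}
    {i j : Q.V} (q : QP Q i j) : AssocPair Q asc (QP.nil i) q := by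
  intro a h
  simp [QP.firstArrow] at h

lemma assocPair_nil_right {Q : FQ} {asc : ∀ i : Q.V, (∃ e, Q.t e = i) → Q.E}
    {i j : Q.V} (p : QP Q i j) : AssocPair Q asc p (QP.nil i) := by
  intro a _ h
  simp [QP.firstArrow] at h

/-- The index set `Λ^l_i` (for `i = x.i`): associated pairs `(p, q)` with
`t(p) = i` and `l(q) - l(p) = l`. -/
structure Lam (Q : FQ) (asc : ∀ i : Q.V, (∃ e, Q.t e = i) → Q.E) (l : ℤ) where
  a : Q.V              -- the common starting vertex of `p` and `q`
  i : Q.V              -- the terminating vertex of `p`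
  b : Q.V              -- the terminating vertex of `q`
  p : QP Q a i
  q : QP Q a b
  ok : AssocPair Q asc p q
  deg : (q.length : ℤ) - (p.length : ℤ) = l

instance {Q : FQ} {asc : ∀ i : Q.V, (∃ e, Q.t e = i) → Q.E} {l : ℤ} :
    DecidableEq (Lam Q asc l) := Classical.decEq _
/-- Generators of the path algebra `kQ`. -/
inductive AGen (Q : FQ)
  | vtx (i : Q.V)
  | ar (e : Q.E)

/-- The defining relations of the radical square zero algebra `A = kQ/J²`:
the trivial paths are orthogonal idempotents summing to the unit, arrows are unital
with respect to the trivial paths at their endpoints, and any product of two arrows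
vanishes. -/
inductive ARel (k : Type) [Field k] (Q : FQ) :
    FreeAlgebra k (AGen Q) → FreeAlgebra k (AGen Q) → Prop
  | vtx_mul (i j : Q.V) :
      ARel k Q (FreeAlgebra.ι k (AGen.vtx i) * FreeAlgebra.ι k (AGen.vtx j))
        (if i = j then FreeAlgebra.ι k (AGen.vtx i) else 0)
  | sum_vtx : ARel k Q (∑ i : Q.V, FreeAlgebra.ι k (AGen.vtx i)) 1
  | vtx_ar (e : Q.E) :
      ARel k Q (FreeAlgebra.ι k (AGen.vtx (Q.t e)) * FreeAlgebra.ι k (AGen.ar e))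
        (FreeAlgebra.ι k (AGen.ar e))
  | ar_vtx (e : Q.E) :
      ARel k Q (FreeAlgebra.ι k (AGen.ar e) * FreeAlgebra.ι k (AGen.vtx (Q.s e)))
        (FreeAlgebra.ι k (AGen.ar e))
  | rad_sq (e f : Q.E) :
      ARel k Q (FreeAlgebra.ι k (AGen.ar e) * FreeAlgebra.ι k (AGen.ar f)) 0

/-- The radical square zero algebra `A = kQ/J²` of the finite quiver `Q`. -/
abbrev AlgA (k : Type) [Field k] (Q : FQ) := RingQuot (ARel k Q)

/-- The image `e_i` in `A` of the trivial path at the vertex `i`. -/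
def vtxA (k : Type) [Field k] (Q : FQ) (i : Q.V) : AlgA k Q :=
  RingQuot.mkAlgHom k (ARel k Q) (FreeAlgebra.ι k (AGen.vtx i))

/-- The image `α` in `A` of an arrow `α`. -/
def arA (k : Type) [Field k] (Q : FQ) (e : Q.E) : AlgA k Q :=
  RingQuot.mkAlgHom k (ARel k Q) (FreeAlgebra.ι k (AGen.ar e))

lemma arA_mul_vtxA (k : Type) [Field k] (Q : FQ) (e : Q.E) :
    arA k Q e * vtxA k Q (Q.s e) = arA k Q e := by
  have h := RingQuot.mkAlgHom_rel k (ARel.ar_vtx (k := k) (Q := Q) e)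
  simpa [vtxA, arA, map_mul] using h

/-- The indecomposable projective left `A`-module `P_i = A e_i`. -/
def Pmod (k : Type) [Field k] (Q : FQ) (i : Q.V) : Submodule (AlgA k Q) (AlgA k Q) :=
  Submodule.span (AlgA k Q) {vtxA k Q i}

lemma vtxA_mem (k : Type) [Field k] (Q : FQ) (i : Q.V) : vtxA k Q i ∈ Pmod k Q i :=
  Submodule.mem_span_singleton_self _

lemma arA_mem (k : Type) [Field k] (Q : FQ) (e : Q.E) {i : Q.V} (he : Q.s e = i) :
    arA k Q e ∈ Pmod k Q i := by
  subst he
  rw [← arA_mul_vtxA k Q e]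
  simpa [smul_eq_mul] using
    Submodule.smul_mem (Pmod k Q (Q.s e)) (arA k Q e) (vtxA_mem k Q (Q.s e))

/-- The `l`-th component `P^l = ⊕_{i ∈ Q₀} P_i^{(Λ^l_i)}` of the projective Leavitt
complex. -/
abbrev PL (k : Type) [Field k] (Q : FQ) (asc : ∀ i : Q.V, (∃ e, Q.t e = i) → Q.E)
    (l : ℤ) : Type :=
  Π₀ x : Lam Q asc l, ↥(Pmod k Q x.i)

instance PL.instAddCommGroup (k : Type) [Field k] (Q : FQ)
    (asc : ∀ i : Q.V, (∃ e, Q.t e = i) → Q.E) (l : ℤ) :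
    AddCommGroup (PL k Q asc l) :=
  @DFinsupp.addCommGroup (Lam Q asc l) (fun x => ↥(Pmod k Q x.i)) (fun _ => inferInstance)
/-- Generators of the Leavitt path algebra: trivial paths, arrows and ghost arrows. -/
inductive LGen (Q : FQ)
  | vtx (i : Q.V)
  | ar (e : Q.E)
  | star (e : Q.E)

/-- The defining relations of the Leavitt path algebra `L_k(Q)`:
(0) `e_i e_j = δ_{ij} e_i`; (1) `e_{t(α)} α = α e_{s(α)} = α`;
(2) `e_{s(α)} α* = α* e_{t(α)} = α*`; (3) `α β* = δ_{αβ} e_{t(α)}` (first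
Cuntz–Krieger relation); (4) `∑_{s(α)=i} α* α = e_i` for every non-sink vertex `i`
(second Cuntz–Krieger relation). -/
inductive LRel (k : Type) [Field k] (Q : FQ) :
    FreeAlgebra k (LGen Q) → FreeAlgebra k (LGen Q) → Prop
  | vtx_mul (i j : Q.V) :
      LRel k Q (FreeAlgebra.ι k (LGen.vtx i) * FreeAlgebra.ι k (LGen.vtx j))
        (if i = j then FreeAlgebra.ι k (LGen.vtx i) else 0)
  | vtx_ar (e : Q.E) :
      LRel k Q (FreeAlgebra.ι k (LGen.vtx (Q.t e)) * FreeAlgebra.ι k (LGen.ar e))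
        (FreeAlgebra.ι k (LGen.ar e))
  | ar_vtx (e : Q.E) :
      LRel k Q (FreeAlgebra.ι k (LGen.ar e) * FreeAlgebra.ι k (LGen.vtx (Q.s e)))
        (FreeAlgebra.ι k (LGen.ar e))
  | vtx_star (e : Q.E) :
      LRel k Q (FreeAlgebra.ι k (LGen.vtx (Q.s e)) * FreeAlgebra.ι k (LGen.star e))
        (FreeAlgebra.ι k (LGen.star e))
  | star_vtx (e : Q.E) :
      LRel k Q (FreeAlgebra.ι k (LGen.star e) * FreeAlgebra.ι k (LGen.vtx (Q.t e)))
        (FreeAlgebra.ι k (LGen.star e))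
  | ck1 (e f : Q.E) :
      LRel k Q (FreeAlgebra.ι k (LGen.ar e) * FreeAlgebra.ι k (LGen.star f))
        (if e = f then FreeAlgebra.ι k (LGen.vtx (Q.t e)) else 0)
  | ck2 (i : Q.V) (h : ∃ e, Q.s e = i) :
      LRel k Q (∑ e : {e : Q.E // Q.s e = i},
          FreeAlgebra.ι k (LGen.star e.1) * FreeAlgebra.ι k (LGen.ar e.1))
        (FreeAlgebra.ι k (LGen.vtx i))

/-- The Leavitt path algebra `L_k(Q)` of the finite quiver `Q` over the field `k`. -/
abbrev Leavitt (k : Type) [Field k] (Q : FQ) := RingQuot (LRel k Q)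

/-- The idempotent `e_i ∈ L_k(Q)`. -/
def vtxL (k : Type) [Field k] (Q : FQ) (i : Q.V) : Leavitt k Q :=
  RingQuot.mkAlgHom k (LRel k Q) (FreeAlgebra.ι k (LGen.vtx i))

/-- The arrow `α ∈ L_k(Q)`. -/
def arL (k : Type) [Field k] (Q : FQ) (e : Q.E) : Leavitt k Q :=
  RingQuot.mkAlgHom k (LRel k Q) (FreeAlgebra.ι k (LGen.ar e))

/-- The ghost arrow `α* ∈ L_k(Q)`. -/
def ghostL (k : Type) [Field k] (Q : FQ) (e : Q.E) : Leavitt k Q :=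
  RingQuot.mkAlgHom k (LRel k Q) (FreeAlgebra.ι k (LGen.star e))

/-- The element `p ∈ L_k(Q)` associated to a path `p` in `Q` (`e_i` for a trivial
path). -/
def pathL (k : Type) [Field k] (Q : FQ) : ∀ {i j : Q.V}, QP Q i j → Leavitt k Q
  | _, _, .nil i => vtxL k Q i
  | _, _, .cons p e _ => arL k Q e * pathL k Q p

/-- The element `p* ∈ L_k(Q)` associated to a path `p` in `Q`
(`p* = α₁* α₂* ⋯ α_m*` for `p = α_m ⋯ α₂ α₁`, and `e_i* = e_i`). -/
def starPathL (k : Type) [Field k] (Q : FQ) : ∀ {i j : Q.V}, QP Q i j → Leavitt k Q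
  | _, _, .nil i => vtxL k Q i
  | _, _, .cons p e _ => starPathL k Q p * ghostL k Q e
/-- The total module `⊕_{l ∈ ℤ} P^l` underlying the projective Leavitt complex. -/
abbrev PT (k : Type) [Field k] (Q : FQ)
    (asc : ∀ i : Q.V, (∃ e, Q.t e = i) → Q.E) : Type :=
  Π₀ l : ℤ, PL k Q asc l

instance PT.instAddCommGroup (k : Type) [Field k] (Q : FQ)
    (asc : ∀ i : Q.V, (∃ e, Q.t e = i) → Q.E) : AddCommGroup (PT k Q asc) :=
  @DFinsupp.addCommGroup ℤ (fun l => PL k Q asc l) (fun _ => inferInstance)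

/-- The element `x ζ_{(p,q)}` of `⊕_{l} P^l` in degree `l`, for `(p,q) ∈ Λ^l_i` and
`x = u ∈ P_i`. -/
def emb {k : Type} [Field k] {Q : FQ} {asc : ∀ i : Q.V, (∃ e, Q.t e = i) → Q.E}
    (l : ℤ) (x : Lam Q asc l) (u : ↥(Pmod k Q x.i)) : PT k Q asc :=
  DFinsupp.single l (DFinsupp.single x u)

/-- The defining formulas (4.2)–(4.4) for the right action of the generators of the
Leavitt path algebra `B = L_k(Q^op)` on the projective Leavitt complex:
`Tv j` is the action of `e_j`, `Ta α` the action of `α^op`, and `Ts α` the action of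
`(α^op)*`.  Explicitly, on `x ζ_{(p,q)}`:
* `x ζ_{(p,q)} · e_j = δ_{j,t(q)} x ζ_{(p,q)}`;
* `x ζ_{(p,q)} · α^op = x ζ_{(p̃, e_{t(α)})} - ∑_{β ∈ T(α)} x ζ_{(p̃β, β)}` if
  `l(q) = 0`, `p = p̃α` and `α` is associated, and `δ_{s(α),t(q)} x ζ_{(p, αq)}`
  otherwise;
* `x ζ_{(p,q)} · (α^op)* = δ_{α,α₁} x ζ_{(p, q̂)}` if `q = α₁ q̂`, and
  `δ_{s(p),t(α)} x ζ_{(pα, e_{s(α)})}` if `l(q) = 0`. -/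
structure ActionFormulas (k : Type) [Field k] (Q : FQ)
    (asc : ∀ i : Q.V, (∃ e, Q.t e = i) → Q.E)
    (Tv : Q.V → PT k Q asc → PT k Q asc)
    (Ta Ts : Q.E → PT k Q asc → PT k Q asc) : Prop where
  fv : ∀ (j : Q.V) (l : ℤ) (x : Lam Q asc l) (u : ↥(Pmod k Q x.i)),
    Tv j (emb l x u) = if x.b = j then emb l x u else 0
  fa_assoc : ∀ (α : Q.E) (_hα : IsAssoc Q asc α) (j : Q.V) (pt : QP Q (Q.t α) j)
    (ok : AssocPair Q asc (QP.preCons α pt) (QP.nil (Q.s α))) (l : ℤ)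
    (dg : (((QP.nil (Q.s α)).length : ℤ)) - (((QP.preCons α pt).length : ℤ)) = l)
    (ok1 : AssocPair Q asc pt (QP.nil (Q.t α)))
    (dg1 : (((QP.nil (Q.t α)).length : ℤ)) - ((pt.length : ℤ)) = l + 1)
    (okb : ∀ b : {b : Q.E // Q.t b = Q.t α ∧ b ≠ α},
      AssocPair Q asc (QP.preCons b.1 (QP.castSrc b.2.1.symm pt))
        (QP.cons (QP.nil (Q.s b.1)) b.1 rfl))
    (dgb : ∀ b : {b : Q.E // Q.t b = Q.t α ∧ b ≠ α},
      (((QP.cons (QP.nil (Q.s b.1)) b.1 rfl).length : ℤ)) -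
        (((QP.preCons b.1 (QP.castSrc b.2.1.symm pt)).length : ℤ)) = l + 1)
    (u : ↥(Pmod k Q j)),
    Ta α (emb l ⟨Q.s α, j, Q.s α, QP.preCons α pt, QP.nil (Q.s α), ok, dg⟩ u) =
      emb (l + 1) ⟨Q.t α, j, Q.t α, pt, QP.nil (Q.t α), ok1, dg1⟩ u -
      ∑ b : {b : Q.E // Q.t b = Q.t α ∧ b ≠ α},
        emb (l + 1) ⟨Q.s b.1, j, Q.t b.1, QP.preCons b.1 (QP.castSrc b.2.1.symm pt),
          QP.cons (QP.nil (Q.s b.1)) b.1 rfl, okb b, dgb b⟩ u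
  fa_ext : ∀ (α : Q.E) (l : ℤ) (x : Lam Q asc l) (u : ↥(Pmod k Q x.i))
    (_hcond : ¬(x.q.length = 0 ∧ x.p.firstArrow = some α ∧ IsAssoc Q asc α))
    (h : Q.s α = x.b) (ok' : AssocPair Q asc x.p (QP.cons x.q α h))
    (dg' : (((QP.cons x.q α h).length : ℤ)) - ((x.p.length : ℤ)) = l + 1),
    Ta α (emb l x u) = emb (l + 1) ⟨x.a, x.i, Q.t α, x.p, QP.cons x.q α h, ok', dg'⟩ u
  fa_zero : ∀ (α : Q.E) (l : ℤ) (x : Lam Q asc l) (u : ↥(Pmod k Q x.i))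
    (_hcond : ¬(x.q.length = 0 ∧ x.p.firstArrow = some α ∧ IsAssoc Q asc α))
    (_h : Q.s α ≠ x.b), Ta α (emb l x u) = 0
  fs_top_eq : ∀ (α₁ : Q.E) (l : ℤ) (a i c : Q.V) (p : QP Q a i) (qh : QP Q a c)
    (he : Q.s α₁ = c)
    (ok : AssocPair Q asc p (QP.cons qh α₁ he))
    (dg : (((QP.cons qh α₁ he).length : ℤ)) - ((p.length : ℤ)) = l)
    (ok' : AssocPair Q asc p qh)
    (dg' : ((qh.length : ℤ)) - ((p.length : ℤ)) = l - 1)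
    (u : ↥(Pmod k Q i)),
    Ts α₁ (emb l ⟨a, i, Q.t α₁, p, QP.cons qh α₁ he, ok, dg⟩ u) =
      emb (l - 1) ⟨a, i, c, p, qh, ok', dg'⟩ u
  fs_top_ne : ∀ (α α₁ : Q.E), α ≠ α₁ → ∀ (l : ℤ) (a i c : Q.V) (p : QP Q a i)
    (qh : QP Q a c) (he : Q.s α₁ = c)
    (ok : AssocPair Q asc p (QP.cons qh α₁ he))
    (dg : (((QP.cons qh α₁ he).length : ℤ)) - ((p.length : ℤ)) = l)
    (u : ↥(Pmod k Q i)),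
    Ts α (emb l ⟨a, i, Q.t α₁, p, QP.cons qh α₁ he, ok, dg⟩ u) = 0
  fs_nil_eq : ∀ (α : Q.E) (l : ℤ) (i : Q.V) (p : QP Q (Q.t α) i)
    (ok : AssocPair Q asc p (QP.nil (Q.t α)))
    (dg : (((QP.nil (Q.t α)).length : ℤ)) - ((p.length : ℤ)) = l)
    (ok' : AssocPair Q asc (QP.preCons α p) (QP.nil (Q.s α)))
    (dg' : (((QP.nil (Q.s α)).length : ℤ)) - (((QP.preCons α p).length : ℤ)) = l - 1)
    (u : ↥(Pmod k Q i)),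
    Ts α (emb l ⟨Q.t α, i, Q.t α, p, QP.nil (Q.t α), ok, dg⟩ u) =
      emb (l - 1) ⟨Q.s α, i, Q.s α, QP.preCons α p, QP.nil (Q.s α), ok', dg'⟩ u
  fs_nil_ne : ∀ (α : Q.E) (l : ℤ) (x : Lam Q asc l) (u : ↥(Pmod k Q x.i)),
    x.q.length = 0 → Q.t α ≠ x.a → Ts α (emb l x u) = 0

/-- The element of `Λ⁰_i` given by the pair `(e_i, e_i)` of trivial paths. -/
def nilLam {Q : FQ} {asc : ∀ i : Q.V, (∃ e, Q.t e = i) → Q.E} (v : Q.V) :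
    Lam Q asc 0 :=
  ⟨v, v, v, QP.nil v, QP.nil v, assocPair_nil_left _, by simp [QP.length]⟩
/-- The element `p^op` of `L_k(Q^op)` associated to a path `p` in `Q`. -/
def pathOp (k : Type) [Field k] (Q : FQ) : ∀ {i j : Q.V}, QP Q i j → Leavitt k Q.op
  | _, _, .nil i => vtxL k Q.op i
  | _, _, .cons p e _ => pathOp k Q p * arL k Q.op e

/-- The element `(p^op)*` of `L_k(Q^op)` associated to a path `p` in `Q`. -/
def starOp (k : Type) [Field k] (Q : FQ) : ∀ {i j : Q.V}, QP Q i j → Leavitt k Q.op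
  | _, _, .nil i => vtxL k Q.op i
  | _, _, .cons p e _ => ghostL k Q.op e * starOp k Q p
section AuxProof

variable {Q : FQ}

lemma QP.castSrc_cons' {i i' j : Q.V} (h : i = i') (p : QP Q i j) (e : Q.E) (he : Q.s e = j) :
    QP.castSrc h (QP.cons p e he) = QP.cons (QP.castSrc h p) e he := by subst h; rfl

lemma QP.castSrc_rfl {i j : Q.V} (p : QP Q i j) : QP.castSrc rfl p = p := rfl

lemma QP.preCons_cons (e : Q.E) {j : Q.V} (r : QP Q (Q.t e) j) (f : Q.E) (hf : Q.s f = j) :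
    QP.preCons e (QP.cons r f hf) = QP.cons (QP.preCons e r) f hf := by
  rw [QP.preCons]

lemma QP.preCons_nil (e : Q.E) :
    QP.preCons e (QP.nil (Q.t e)) = QP.cons (QP.nil (Q.s e)) e rfl := by
  rw [QP.preCons]

/-- Compose `p` before `r`. -/
def QP.precomp : ∀ {a i : Q.V}, QP Q a i → ∀ {j : Q.V}, QP Q i j → QP Q a j
  | _, _, .nil _, _, r => r
  | _, _, .cons p e he, _, r => QP.precomp p (QP.castSrc he (QP.preCons e r))

lemma QP.precomp_nil_left {a : Q.V} {j : Q.V} (r : QP Q a j) :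
    QP.precomp (QP.nil a) r = r := by rw [QP.precomp]

lemma QP.precomp_cons_left {a i : Q.V} (p : QP Q a i) (e : Q.E) (he : Q.s e = i)
    {j : Q.V} (r : QP Q (Q.t e) j) :
    QP.precomp (QP.cons p e he) r = QP.precomp p (QP.castSrc he (QP.preCons e r)) := by
  rw [QP.precomp]

lemma QP.precomp_cons {a i : Q.V} (p : QP Q a i) : ∀ {j : Q.V} (r : QP Q i j)
    (e : Q.E) (he : Q.s e = j),
    QP.precomp p (QP.cons r e he) = QP.cons (QP.precomp p r) e he := by
  induction p with
  | nil =>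
    intro j r e he
    rw [QP.precomp_nil_left, QP.precomp_nil_left]
  | cons p f hf ih =>
    intro j r e he
    rw [QP.precomp_cons_left, QP.preCons_cons, QP.castSrc_cons', ih,
      QP.precomp_cons_left]

lemma QP.precomp_nil {a i : Q.V} (p : QP Q a i) : QP.precomp p (QP.nil i) = p := by
  induction p with
  | nil => rw [QP.precomp_nil_left]
  | cons p e he ih =>
    subst he
    rw [QP.precomp_cons_left, QP.castSrc_rfl, QP.preCons_nil, QP.precomp_cons, ih]

lemma QP.firstArrow_eq_none {i j : Q.V} {p : QP Q i j} (h : p.length = 0) :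
    p.firstArrow = none := by
  cases p with
  | nil => simp [QP.firstArrow]
  | cons p e he => simp [QP.length] at h

lemma assocPair_of_cons {asc : ∀ i : Q.V, (∃ e, Q.t e = i) → Q.E}
    {a i c : Q.V} {p : QP Q a i} {q : QP Q a c} {e : Q.E} {he : Q.s e = c}
    (ok : AssocPair Q asc p (QP.cons q e he)) : AssocPair Q asc p q := by
  intro x hx hq
  exact ok x hx (by simp [QP.firstArrow, hq])

lemma emb_congrP {k : Type} [Field k] {asc : ∀ i : Q.V, (∃ e, Q.t e = i) → Q.E}
    {l : ℤ} {a i b : Q.V} {P P' : QP Q a i} (h : P = P') (q : QP Q a b)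
    (ok : AssocPair Q asc P q) (dg : (q.length : ℤ) - (P.length : ℤ) = l)
    (ok' : AssocPair Q asc P' q) (dg' : (q.length : ℤ) - (P'.length : ℤ) = l)
    (u : ↥(Pmod k Q i)) :
    emb l ⟨a, i, b, P, q, ok, dg⟩ u = emb l ⟨a, i, b, P', q, ok', dg'⟩ u := by
  subst h; rfl

variable {k : Type} [Field k] {asc : ∀ i : Q.V, (∃ e, Q.t e = i) → Q.E}
  (ρ : Leavitt k Q.op →+* (Module.End (AlgA k Q) (PT k Q asc))ᵐᵒᵖ)

include ρ in
lemma unop_mul_apply (x y : Leavitt k Q.op) (v : PT k Q asc) :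
    (ρ (x * y)).unop v = (ρ y).unop ((ρ x).unop v) := by
  rw [map_mul, MulOpposite.unop_mul, Module.End.mul_apply]

variable (hF : ActionFormulas k Q asc
      (fun j u => (ρ (vtxL k Q.op j)).unop u)
      (fun e u => (ρ (arL k Q.op e)).unop u)
      (fun e u => (ρ (ghostL k Q.op e)).unop u))

include ρ hF

lemma starOp_act : ∀ {a i : Q.V} (p : QP Q a i), ∀ {j : Q.V} (r : QP Q i j)
    (l0 l1 : ℤ)
    (okr : AssocPair Q asc r (QP.nil i))
    (dgr : ((QP.nil i).length : ℤ) - (r.length : ℤ) = l0)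
    (hl : l1 = l0 - p.length)
    (ok' : AssocPair Q asc (QP.precomp p r) (QP.nil a))
    (dg' : ((QP.nil a).length : ℤ) - ((QP.precomp p r).length : ℤ) = l1)
    (u : ↥(Pmod k Q j)),
    (ρ (starOp k Q p)).unop (emb l0 ⟨i, j, i, r, QP.nil i, okr, dgr⟩ u)
      = emb l1 ⟨a, j, a, QP.precomp p r, QP.nil a, ok', dg'⟩ u := by
  intro a i p
  induction p with
  | nil =>
    intro j r l0 l1 okr dgr hl ok' dg' u
    have hl0 : l1 = l0 := by simp [QP.length] at hl; omega
    subst hl0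
    rw [starOp]
    have h1 := hF.fv a l1 ⟨a, j, a, r, QP.nil a, okr, dgr⟩ u
    rw [if_pos (show (⟨a, j, a, r, QP.nil a, okr, dgr⟩ : Lam Q asc l1).b = a from rfl)] at h1
    refine h1.trans ?_
    exact (emb_congrP (QP.precomp_nil_left r).symm (QP.nil _) okr dgr ok' dg' u)
  | cons p' e he ih =>
    subst he
    intro j r l0 l1 okr dgr hl ok' dg' u
    rw [starOp, unop_mul_apply]
    have ok1 : AssocPair Q asc (QP.preCons e r) (QP.nil (Q.s e)) :=
      assocPair_nil_right _
    have dg1 : ((QP.nil (Q.s e)).length : ℤ) - ((QP.preCons e r).length : ℤ) = l0 - 1 := by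
      simp only [QP.length, QP.length_preCons] at dgr ⊢
      push_cast at dgr ⊢
      omega
    have hinner := hF.fs_nil_eq e l0 j r okr dgr ok1 dg1 u
    rw [hinner]
    have hpre : QP.precomp p' (QP.preCons e r) = QP.precomp (QP.cons p' e rfl) r := by
      rw [QP.precomp_cons_left, QP.castSrc_rfl]
    have okP : AssocPair Q asc (QP.precomp p' (QP.preCons e r)) (QP.nil a) :=
      assocPair_nil_right _
    have dgP : ((QP.nil a).length : ℤ) - ((QP.precomp p' (QP.preCons e r)).length : ℤ)
        = l1 := by rw [hpre]; exact dg'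
    have hl' : l1 = (l0 - 1) - (p'.length : ℤ) := by
      simp only [QP.length] at hl; push_cast at hl; omega
    refine (ih (QP.preCons e r) (l0 - 1) l1 ok1 dg1 hl' okP dgP u).trans ?_
    exact emb_congrP hpre (QP.nil a) okP dgP ok' dg' u

lemma starOp_kill : ∀ {a i : Q.V} (p : QP Q a i) (v : Q.V), v ≠ i →
    ∀ (u : ↥(Pmod k Q v)),
    (ρ (starOp k Q p)).unop (emb 0 (nilLam v) u) = 0 := by
  intro a i p
  induction p with
  | nil =>
    intro v hv u
    rw [starOp]
    have h1 := hF.fv a 0 (nilLam v) u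
    rw [if_neg (show ¬((nilLam v).b = a) from hv)] at h1
    exact h1
  | cons p' e he ih =>
    intro v hv u
    rw [starOp, unop_mul_apply]
    have hinner := hF.fs_nil_ne e 0 (nilLam v) u
      (show (nilLam v).q.length = 0 from by simp [nilLam, QP.length])
      (show Q.t e ≠ (nilLam v).a from fun h => hv h.symm)
    rw [hinner, map_zero]

lemma pathOp_act : ∀ {a b : Q.V} (q : QP Q a b), ∀ {i : Q.V} (p : QP Q a i)
    (ok : AssocPair Q asc p q) (l0 l1 : ℤ)
    (okn : AssocPair Q asc p (QP.nil a))
    (dgn : ((QP.nil a).length : ℤ) - (p.length : ℤ) = l0)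
    (hl : l1 = l0 + q.length)
    (dg : (q.length : ℤ) - (p.length : ℤ) = l1)
    (u : ↥(Pmod k Q i)),
    (ρ (pathOp k Q q)).unop (emb l0 ⟨a, i, a, p, QP.nil a, okn, dgn⟩ u)
      = emb l1 ⟨a, i, b, p, q, ok, dg⟩ u := by
  intro a b q
  induction q with
  | nil =>
    intro i p ok l0 l1 okn dgn hl dg u
    have hl0 : l1 = l0 := by simp [QP.length] at hl; omega
    subst hl0
    rw [pathOp]
    have h1 := hF.fv a l1 ⟨a, i, a, p, QP.nil a, okn, dgn⟩ u
    rw [if_pos (show (⟨a, i, a, p, QP.nil a, okn, dgn⟩ : Lam Q asc l1).b = a from rfl)] at h1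
    exact h1
  | cons q' e he ih =>
    intro i p ok l0 l1 okn dgn hl dg u
    rw [pathOp, unop_mul_apply]
    have ok' : AssocPair Q asc p q' := assocPair_of_cons ok
    have dg' : ((q'.length : ℤ)) - (p.length : ℤ) = l0 + q'.length := by
      simp only [QP.length] at dgn
      push_cast at dgn ⊢
      omega
    rw [ih p ok' l0 (l0 + q'.length) okn dgn rfl dg' u]
    have hcond : ¬(q'.length = 0 ∧ p.firstArrow = some e ∧ IsAssoc Q asc e) := by
      rintro ⟨h0, hp, hia⟩
      exact ok e hp (by simp [QP.firstArrow, QP.firstArrow_eq_none h0]) hia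
    have hl1 : l1 = (l0 + (q'.length : ℤ)) + 1 := by
      simp only [QP.length] at hl
      push_cast at hl
      omega
    subst hl1
    have hext := hF.fa_ext e (l0 + q'.length) ⟨a, i, _, p, q', ok', dg'⟩ u hcond he ok dg
    exact hext

end AuxProof

/-- **The action of `(p^op)* q^op` on the canonical generators (Lemma 4.5).**  Let `Q`
be a finite quiver without sources and let the Leavitt path algebra `B = L_k(Q^op)` act
on the right of the projective Leavitt complex `P•` through `ρ`, the action of the
generators being given by the defining formulas.  Then for every associated pair
`(p, q)` in `Q`:
(1) `(∑_{i ∈ Q₀} e_i ζ_{(e_i,e_i)}) · (p^op)* q^op = e_{t(p)} ζ_{(p,q)}`; and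
(2) `β ζ_{(e_{s(β)}, e_{s(β)})} · (p^op)* q^op = δ_{s(β), t(p)} β ζ_{(p,q)}` for every
arrow `β ∈ Q₁`. -/
theorem action_on_canonical_generators (k : Type) [Field k]
    (Q : FQ) (hQ : Q.NoSources)
    (asc : ∀ i : Q.V, (∃ e, Q.t e = i) → Q.E)
    (hasc : ∀ (i : Q.V) (h : ∃ e, Q.t e = i), Q.t (asc i h) = i)
    (ρ : Leavitt k Q.op →+* (Module.End (AlgA k Q) (PT k Q asc))ᵐᵒᵖ)
    (hF : ActionFormulas k Q asc
      (fun j u => (ρ (vtxL k Q.op j)).unop u)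
      (fun e u => (ρ (arL k Q.op e)).unop u)
      (fun e u => (ρ (ghostL k Q.op e)).unop u))
    {a i b : Q.V} (p : QP Q a i) (q : QP Q a b)
    (ok : AssocPair Q asc p q) (l : ℤ)
    (dg : (q.length : ℤ) - (p.length : ℤ) = l) :
    ((ρ (starOp k Q p * pathOp k Q q)).unop
        (∑ v : Q.V, emb 0 (nilLam v) ⟨vtxA k Q v, vtxA_mem k Q v⟩) =
      emb l ⟨a, i, b, p, q, ok, dg⟩ ⟨vtxA k Q i, vtxA_mem k Q i⟩) ∧
    ∀ β : Q.E,
      (ρ (starOp k Q p * pathOp k Q q)).unop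
          (emb 0 (nilLam (Q.s β)) ⟨arA k Q β, arA_mem k Q β rfl⟩) =
        if h : Q.s β = i then
          emb l ⟨a, i, b, p, q, ok, dg⟩ ⟨arA k Q β, arA_mem k Q β h⟩
        else 0 := by
  have okn : AssocPair Q asc p (QP.nil a) := assocPair_nil_right _
  have dgn : ((QP.nil a).length : ℤ) - (p.length : ℤ) = 0 - (p.length : ℤ) := by
    simp [QP.length]
  have ok2 : AssocPair Q asc (QP.precomp p (QP.nil i)) (QP.nil a) := by
    rw [QP.precomp_nil]; exact okn
  have dg2 : ((QP.nil a).length : ℤ) - ((QP.precomp p (QP.nil i)).length : ℤ)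
      = 0 - (p.length : ℤ) := by rw [QP.precomp_nil]; exact dgn
  have hl : l = (0 - (p.length : ℤ)) + q.length := by omega
  have okr0 : AssocPair Q asc (QP.nil i) (QP.nil i) := assocPair_nil_left _
  have dgr0 : ((QP.nil i).length : ℤ) - ((QP.nil i).length : ℤ) = 0 := by simp
  have main : ∀ (u : ↥(Pmod k Q i)),
      (ρ (starOp k Q p * pathOp k Q q)).unop (emb 0 (nilLam i) u)
        = emb l ⟨a, i, b, p, q, ok, dg⟩ u := by
    intro u
    rw [unop_mul_apply]
    rw [show emb (0 : ℤ) (nilLam i) u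
          = emb 0 ⟨i, i, i, QP.nil i, QP.nil i, okr0, dgr0⟩ u from rfl,
      starOp_act ρ hF p (QP.nil i) 0 (0 - (p.length : ℤ))
        okr0 dgr0 rfl ok2 dg2 u,
      emb_congrP (QP.precomp_nil p) (QP.nil a) ok2 dg2 okn dgn u,
      pathOp_act ρ hF q p ok (0 - (p.length : ℤ)) l okn dgn hl dg u]
  constructor
  · have hmul : (ρ (starOp k Q p * pathOp k Q q)).unop
        (∑ v : Q.V, emb 0 (nilLam v) ⟨vtxA k Q v, vtxA_mem k Q v⟩)
        = ∑ v : Q.V, (ρ (starOp k Q p * pathOp k Q q)).unop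
            (emb 0 (nilLam v) ⟨vtxA k Q v, vtxA_mem k Q v⟩) := map_sum _ _ _
    rw [hmul]
    rw [Finset.sum_eq_single i
      (fun v _ hv => by
        rw [unop_mul_apply]
        exact (congrArg (ρ (pathOp k Q q)).unop (starOp_kill ρ hF p v hv _)).trans (map_zero _))
      (fun h => absurd (Finset.mem_univ i) h)]
    exact main _
  · intro β
    by_cases h : Q.s β = i
    · subst h
      rw [dif_pos rfl]
      exact main _
    · rw [dif_neg h, unop_mul_apply]
      exact (congrArg (ρ (pathOp k Q q)).unop (starOp_kill ρ hF p (Q.s β) h _)).trans (map_zero _)
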